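/- arXiv:2602.06758 — 5 statements merged into one kernel-verified Lean document; each statement's English description precedes it below -/
import Mathlib

section
/- Let v ≥ 3 be a real number and y > 0. Then J_{v+2}(y) < J_v(y) if and only if G(v,y) > 1, where J_v(y) := 2·F_v(y·√(v/(v−2))) − 1 and G(v,y) := v·∫_1^{√(v/(v−2))} ((v+y²)/(v+y²x²))^{(v+1)/2} dx. -/
open MeasureTheory Real intervalIntegral

/-- The Student t density with `v` degrees of freedom. -/
noncomputable def tDensity (v x : ℝ) : ℝ :=
  Real.Gamma ((v + 1) / 2) / (Real.sqrt (v * π) * Real.Gamma (v / 2)) *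
    (1 + x ^ 2 / v) ^ (-((v + 1) / 2))

/-- The Student t distribution function. -/
noncomputable def tCDF (v t : ℝ) : ℝ := ∫ x in Set.Iic t, tDensity v x

/-- `J v y = P(|X_v| ≤ y √(v/(v-2)))`. -/
noncomputable def J (v y : ℝ) : ℝ := 2 * tCDF v (y * Real.sqrt (v / (v - 2))) - 1

/-- The comparison function `G(v, y)`. -/
noncomputable def G (v y : ℝ) : ℝ :=
  v * ∫ x in (1 : ℝ)..Real.sqrt (v / (v - 2)),
    ((v + y ^ 2) / (v + y ^ 2 * x ^ 2)) ^ ((v + 1) / 2)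


lemma continuous_rpow_const_pos {q : ℝ} (hq : 0 < q) : Continuous fun x : ℝ => x ^ q :=
  continuous_iff_continuousAt.2 fun x => Real.continuousAt_rpow_const x q (Or.inr hq.le)

lemma cospow_deriv (w : ℝ) (hw : 3 ≤ w) {θ : ℝ} (hθ : θ ∈ Set.Icc 0 (π/2)) :
    HasDerivAt (fun t => Real.cos t ^ w * Real.sin t)
      ((w+1) * Real.cos θ ^ (w+1) - w * Real.cos θ ^ (w-1)) θ := by
  have hc : 0 ≤ Real.cos θ := Real.cos_nonneg_of_mem_Icc ⟨by linarith [hθ.1, pi_pos], hθ.2⟩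
  have h1 : HasDerivAt (fun t => Real.cos t ^ w) (w * Real.cos θ ^ (w-1) * (-Real.sin θ)) θ :=
    (Real.hasDerivAt_rpow_const (p := w) (Or.inr (by linarith))).comp θ (Real.hasDerivAt_cos θ)
  have h2 := h1.mul (Real.hasDerivAt_sin θ)
  refine h2.congr_deriv ?_
  have e1 : Real.cos θ ^ (w-1) * Real.cos θ ^ 2 = Real.cos θ ^ (w+1) := by
    rw [← Real.rpow_two, ← Real.rpow_add' hc (by intro h; linarith)]
    congr 1; ring
  have e2 : Real.cos θ ^ w * Real.cos θ = Real.cos θ ^ (w+1) := by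
    nth_rewrite 2 [← Real.rpow_one (Real.cos θ)]
    rw [← Real.rpow_add' hc (by intro h; linarith)]
  have hs : Real.sin θ ^ 2 = 1 - Real.cos θ ^ 2 := Real.sin_sq θ
  linear_combination (-(w * Real.cos θ ^ (w-1))) * hs + w * e1 + e2

lemma cospow_ftc (w : ℝ) (hw : 3 ≤ w) {T : ℝ} (hT0 : 0 ≤ T) (hT : T ≤ π/2) :
    ∫ θ in (0:ℝ)..T, ((w+1) * Real.cos θ ^ (w+1) - w * Real.cos θ ^ (w-1))
      = Real.cos T ^ w * Real.sin T := by
  have hcont : Continuous fun θ : ℝ => (w+1) * Real.cos θ ^ (w+1) - w * Real.cos θ ^ (w-1) := by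
    have c1 := (continuous_rpow_const_pos (q := w+1) (by linarith)).comp Real.continuous_cos
    have c2 := (continuous_rpow_const_pos (q := w-1) (by linarith)).comp Real.continuous_cos
    exact ((continuous_const.mul c1).sub (continuous_const.mul c2))
  have := intervalIntegral.integral_eq_sub_of_hasDerivAt
    (f := fun t => Real.cos t ^ w * Real.sin t)
    (f' := fun θ => (w+1) * Real.cos θ ^ (w+1) - w * Real.cos θ ^ (w-1))
    (a := 0) (b := T) ?_ (hcont.intervalIntegrable 0 T)
  · rw [this]; simp
  · intro x hx
    rw [Set.uIcc_of_le hT0] at hx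
    exact cospow_deriv w hw ⟨hx.1, le_trans hx.2 hT⟩

lemma integrand_simp {w : ℝ} (hw : 0 < w) {θ : ℝ} (hc : 0 < Real.cos θ) :
    (Real.sqrt w * (1 / Real.cos θ ^ 2)) * (1 + (Real.sqrt w * Real.tan θ)^2/w) ^ (-((w+1)/2))
      = Real.sqrt w * Real.cos θ ^ (w-1) := by
  have h1 : 1 + (Real.sqrt w * Real.tan θ)^2/w = (Real.cos θ ^ 2)⁻¹ := by
    rw [mul_pow, Real.sq_sqrt hw.le, ← Real.inv_one_add_tan_sq hc.ne']
    congr 1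
    field_simp
  have h2 : ((Real.cos θ^2)⁻¹ : ℝ) ^ (-((w+1)/2)) = Real.cos θ ^ (w+1) := by
    rw [Real.inv_rpow (sq_nonneg _), Real.rpow_neg (sq_nonneg _), inv_inv,
        ← Real.rpow_two, ← Real.rpow_mul hc.le]
    congr 1; ring
  have h3 : Real.cos θ ^ (w+1) = Real.cos θ ^ (w-1) * Real.cos θ^2 := by
    rw [← Real.rpow_two, ← Real.rpow_add hc]; congr 1; ring
  rw [h1, h2, h3]
  field_simp

lemma tan_sub {k : ℝ} (hk : 0 < k) {α β : ℝ} (hα : 0 ≤ α) (hβ : β < π/2) (hαβ : α ≤ β)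
    {g : ℝ → ℝ} (hg : Continuous g) :
    ∫ x in (k * Real.tan α)..(k * Real.tan β), g x
      = ∫ θ in α..β, (k * (1 / Real.cos θ ^ 2)) * g (k * Real.tan θ) := by
  have hcos : ∀ θ ∈ Set.uIcc α β, 0 < Real.cos θ := by
    intro θ hθ
    rw [Set.uIcc_of_le hαβ] at hθ
    exact Real.cos_pos_of_mem_Ioo ⟨by nlinarith [hθ.1, Real.pi_pos], lt_of_le_of_lt hθ.2 hβ⟩
  rw [← intervalIntegral.integral_comp_smul_deriv (f := fun t => k * Real.tan t)
      (f' := fun t => k * (1 / Real.cos t ^ 2)) (g := g)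
      (fun x hx => ((Real.hasDerivAt_tan (hcos x hx).ne').const_mul (k)))
      ?_ hg]
  · simp [smul_eq_mul]
  · apply ContinuousOn.mul continuousOn_const
    apply ContinuousOn.div continuousOn_const (Real.continuous_cos.pow 2).continuousOn
    exact fun x hx => pow_ne_zero 2 (hcos x hx).ne'

lemma g_cont {w : ℝ} (hw : 0 < w) :
    Continuous (fun x : ℝ => (1 + x^2/w) ^ (-((w+1)/2))) := by
  have hb : Continuous fun x : ℝ => 1 + x^2/w := by continuity
  exact hb.rpow_const fun x => Or.inl (by positivity)

lemma g_integrable {w : ℝ} (hw : 1 ≤ w) :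
    Integrable (fun x : ℝ => (1 + x^2/w) ^ (-((w+1)/2))) := by
  have hw0 : (0:ℝ) < w := by linarith
  have hbase : ∀ x : ℝ, (1:ℝ) ≤ 1 + x^2/w := fun x => by
    have : (0:ℝ) ≤ x^2/w := by positivity
    linarith
  have hInt : Integrable (fun x : ℝ => (1 + x^2/w)⁻¹) := by
    have := integrable_inv_one_add_sq.comp_div (R := Real.sqrt w) (Real.sqrt_ne_zero'.2 hw0)
    refine this.congr (Filter.Eventually.of_forall fun x => ?_)
    simp only
    rw [div_pow, Real.sq_sqrt hw0.le]
  refine hInt.mono ((g_cont hw0).aestronglyMeasurable) (Filter.Eventually.of_forall fun x => ?_)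
  rw [Real.norm_eq_abs, Real.norm_eq_abs, abs_of_pos (by positivity),
    abs_of_pos (by positivity : (0:ℝ) < (1 + x^2/w)⁻¹), ← Real.rpow_neg_one (1 + x^2/w)]
  exact Real.rpow_le_rpow_of_exponent_le (hbase x) (by linarith)

lemma even_Iic {f : ℝ → ℝ} (hf : Integrable f) (he : ∀ x, f (-x) = f x) :
    ∫ x in Set.Iic (0:ℝ), f x = (1/2) * ∫ x, f x := by
  have h1 : (∫ x in Set.Iic (0:ℝ), f x) + ∫ x in Set.Ioi (0:ℝ), f x = ∫ x, f x :=
    intervalIntegral.integral_Iic_add_Ioi hf.integrableOn hf.integrableOn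
  have h2 : ∫ x in Set.Ioi (0:ℝ), f x = ∫ x in Set.Iic (0:ℝ), f x := by
    calc ∫ x in Set.Ioi (0:ℝ), f x
        = ∫ x in Set.Ioi (0:ℝ), f (-x) :=
          (MeasureTheory.setIntegral_congr_fun measurableSet_Ioi fun x _ => he x).symm
      _ = ∫ x in Set.Iic (-(0:ℝ)), f x := integral_comp_neg_Ioi 0 f
      _ = ∫ x in Set.Iic (0:ℝ), f x := by rw [neg_zero]
  linarith [h1, h2]

lemma total_sub {w : ℝ} (hw : 0 < w) :
    ∫ x : ℝ, (1 + x^2/w) ^ (-((w+1)/2))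
      = Real.sqrt w * ∫ θ in Set.Ioo (-(π/2)) (π/2), Real.cos θ ^ (w-1) := by
  have hsqw : (0:ℝ) < Real.sqrt w := Real.sqrt_pos.2 hw
  have hs : MeasurableSet (Set.Ioo (-(π/2)) (π/2)) := measurableSet_Ioo
  have hcos : ∀ θ ∈ Set.Ioo (-(π/2)) (π/2), 0 < Real.cos θ :=
    fun θ hθ => Real.cos_pos_of_mem_Ioo hθ
  have hderiv : ∀ θ ∈ Set.Ioo (-(π/2)) (π/2),
      HasDerivWithinAt (fun t => Real.sqrt w * Real.tan t)
        (Real.sqrt w * (1 / Real.cos θ ^ 2)) (Set.Ioo (-(π/2)) (π/2)) θ :=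
    fun θ hθ => ((Real.hasDerivAt_tan (hcos θ hθ).ne').const_mul (Real.sqrt w)).hasDerivWithinAt
  have hinj : Set.InjOn (fun t => Real.sqrt w * Real.tan t) (Set.Ioo (-(π/2)) (π/2)) := by
    intro a ha b hb hab
    exact Real.strictMonoOn_tan.injOn ha hb (mul_left_cancel₀ hsqw.ne' hab)
  have himg : (fun t => Real.sqrt w * Real.tan t) '' (Set.Ioo (-(π/2)) (π/2)) = Set.univ := by
    rw [show (fun t => Real.sqrt w * Real.tan t) = (fun x => Real.sqrt w * x) ∘ Real.tan from
      rfl, Set.image_comp, Real.image_tan_Ioo, Set.image_univ, Set.range_eq_univ]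
    exact mul_left_surjective₀ hsqw.ne'
  have key := integral_image_eq_integral_abs_deriv_smul hs hderiv hinj
    (fun x => (1 + x^2/w) ^ (-((w+1)/2)))
  rw [himg, MeasureTheory.setIntegral_univ] at key
  rw [key, ← MeasureTheory.integral_const_mul]
  apply MeasureTheory.setIntegral_congr_fun hs
  intro θ hθ
  have hc := hcos θ hθ
  have habs : |Real.sqrt w * (1 / Real.cos θ ^ 2)| = Real.sqrt w * (1 / Real.cos θ ^ 2) := by
    rw [abs_of_pos]; positivity
  simp only [smul_eq_mul, habs]
  exact integrand_simp hw hc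

lemma cos_even_split {s : ℝ} (hs : 0 < s) :
    ∫ θ in Set.Ioo (-(π/2)) (π/2), Real.cos θ ^ s
      = 2 * ∫ θ in (0:ℝ)..(π/2), Real.cos θ ^ s := by
  have hc : (0:ℝ) ≤ π/2 := by positivity
  have hcont : Continuous fun θ : ℝ => Real.cos θ ^ s :=
    (continuous_rpow_const_pos hs).comp Real.continuous_cos
  have h1 : ∫ θ in Set.Ioo (-(π/2)) (π/2), Real.cos θ ^ s
      = ∫ θ in (-(π/2))..(π/2), Real.cos θ ^ s := by
    rw [intervalIntegral.integral_of_le (by linarith),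
      MeasureTheory.setIntegral_congr_set Ioo_ae_eq_Ioc]
  have h2 : (∫ θ in (-(π/2))..(0:ℝ), Real.cos θ ^ s) + ∫ θ in (0:ℝ)..(π/2), Real.cos θ ^ s
      = ∫ θ in (-(π/2))..(π/2), Real.cos θ ^ s :=
    intervalIntegral.integral_add_adjacent_intervals
      (hcont.intervalIntegrable _ _) (hcont.intervalIntegrable _ _)
  have h3 : ∫ θ in (-(π/2))..(0:ℝ), Real.cos θ ^ s
      = ∫ θ in (0:ℝ)..(π/2), Real.cos θ ^ s := by
    have := intervalIntegral.integral_comp_neg (a := (0:ℝ)) (b := π/2)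
      (f := fun θ => Real.cos θ ^ s)
    simp only [Real.cos_neg, neg_zero] at this
    exact this.symm
  rw [h1, ← h2, h3]; ring

lemma sq_rpow_half {c s : ℝ} (hc : 0 ≤ c) : (c^2) ^ (s/2) = c ^ s := by
  rw [← Real.rpow_two, ← Real.rpow_mul hc]
  congr 1; ring

lemma G_integrand {v y : ℝ} (hv0 : 0 < v) (hy : 0 < y) {θ : ℝ} (hcθ : 0 < Real.cos θ) :
    (Real.sqrt v / y * (1 / Real.cos θ ^ 2)) *
      ((v + y^2)/(v + y^2 * (Real.sqrt v / y * Real.tan θ)^2)) ^ ((v+1)/2)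
      = (Real.cos (Real.arctan (y/Real.sqrt v)) ^ v
          * Real.sin (Real.arctan (y/Real.sqrt v)))⁻¹ * Real.cos θ ^ (v-1) := by
  set φ := Real.arctan (y/Real.sqrt v) with hφ
  have hsv : 0 < Real.sqrt v := Real.sqrt_pos.2 hv0
  have hcφ : 0 < Real.cos φ := Real.cos_arctan_pos _
  have hφpos : 0 < φ := by
    rw [hφ, ← Real.arctan_zero]
    exact Real.arctan_strictMono (by positivity)
  have hsφ : 0 < Real.sin φ :=
    Real.sin_pos_of_pos_of_lt_pi hφpos (lt_trans (Real.arctan_lt_pi_div_two _)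
      (by linarith [Real.pi_pos]))
  have htφ : Real.tan φ = y / Real.sqrt v := Real.tan_arctan _
  have hk : Real.sqrt v / y = Real.cos φ / Real.sin φ := by
    rw [Real.tan_eq_sin_div_cos] at htφ
    rw [div_eq_div_iff hy.ne' hsφ.ne']
    rw [div_eq_div_iff hcφ.ne' hsv.ne'] at htφ
    linarith
  have he1 : y^2 * (Real.sqrt v / y * Real.tan θ)^2 = v * Real.tan θ^2 := by
    rw [mul_pow, div_pow, Real.sq_sqrt hv0.le]
    field_simp
  have hinv : ∀ {t : ℝ}, Real.cos t ≠ 0 → (1:ℝ) + Real.tan t ^ 2 = (Real.cos t ^ 2)⁻¹ := by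
    intro t ht
    rw [← Real.inv_one_add_tan_sq ht, inv_inv]
  have he2 : v + v * Real.tan θ^2 = v / Real.cos θ^2 := by
    calc v + v * Real.tan θ^2 = v * (1 + Real.tan θ^2) := by ring
      _ = v * (Real.cos θ^2)⁻¹ := by rw [hinv hcθ.ne']
      _ = v / Real.cos θ^2 := by rw [div_eq_mul_inv]
  have he3 : v + y^2 = v / Real.cos φ^2 := by
    have ht2 : Real.tan φ ^ 2 = y^2 / v := by
      rw [htφ, div_pow, Real.sq_sqrt hv0.le]
    calc v + y^2 = v * (1 + Real.tan φ^2) := by rw [ht2]; field_simp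
      _ = v * (Real.cos φ^2)⁻¹ := by rw [hinv hcφ.ne']
      _ = v / Real.cos φ^2 := by rw [div_eq_mul_inv]
  have hratio : (v + y^2)/(v + y^2 * (Real.sqrt v / y * Real.tan θ)^2)
      = Real.cos θ^2 / Real.cos φ^2 := by
    rw [he1, he2, he3]
    field_simp
  have hrpow : (Real.cos θ^2 / Real.cos φ^2) ^ ((v+1)/2)
      = Real.cos θ^(v+1) / Real.cos φ^(v+1) := by
    rw [Real.div_rpow (sq_nonneg _) (sq_nonneg _), sq_rpow_half hcθ.le, sq_rpow_half hcφ.le]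
  have hθsplit : Real.cos θ^(v+1) = Real.cos θ^(v-1) * Real.cos θ^2 := by
    rw [← Real.rpow_two, ← Real.rpow_add hcθ]; congr 1; ring
  have hφsplit : Real.cos φ^(v+1) = Real.cos φ^v * Real.cos φ := by
    nth_rewrite 3 [← Real.rpow_one (Real.cos φ)]
    rw [← Real.rpow_add hcφ]
  have hφvpos : 0 < Real.cos φ ^ v := Real.rpow_pos_of_pos hcφ v
  rw [hratio, hrpow, hθsplit, hφsplit, hk]
  field_simp

lemma density_sub {w : ℝ} (hw : 0 < w) {β : ℝ} (hβ0 : 0 ≤ β) (hβ : β < π/2) :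
    ∫ x in (0:ℝ)..(Real.sqrt w * Real.tan β), (1 + x^2/w) ^ (-((w+1)/2))
      = Real.sqrt w * ∫ θ in (0:ℝ)..β, Real.cos θ ^ (w-1) := by
  have hk : 0 < Real.sqrt w := Real.sqrt_pos.2 hw
  have h0 : (0:ℝ) = Real.sqrt w * Real.tan 0 := by simp
  rw [← intervalIntegral.integral_const_mul]
  calc ∫ x in (0:ℝ)..(Real.sqrt w * Real.tan β), (1 + x^2/w) ^ (-((w+1)/2))
      = ∫ x in (Real.sqrt w * Real.tan 0)..(Real.sqrt w * Real.tan β),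
          (1 + x^2/w) ^ (-((w+1)/2)) := by rw [← h0]
    _ = ∫ θ in (0:ℝ)..β, (Real.sqrt w * (1 / Real.cos θ ^ 2)) *
          (1 + (Real.sqrt w * Real.tan θ)^2/w) ^ (-((w+1)/2)) :=
        tan_sub hk le_rfl hβ hβ0 (g_cont hw)
    _ = ∫ θ in (0:ℝ)..β, Real.sqrt w * Real.cos θ ^ (w-1) := by
        apply intervalIntegral.integral_congr
        intro θ hθ
        rw [Set.uIcc_of_le hβ0] at hθ
        exact integrand_simp hw (Real.cos_pos_of_mem_Ioo
          ⟨by nlinarith [hθ.1, Real.pi_pos], lt_of_le_of_lt hθ.2 hβ⟩)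


lemma K_const {w : ℝ} (hw : 0 < w) :
    Real.Gamma ((w+1)/2) / (Real.sqrt (w*π) * Real.Gamma (w/2)) * Real.sqrt w
      = Real.Gamma ((w+1)/2) / (Real.sqrt π * Real.Gamma (w/2)) := by
  rw [Real.sqrt_mul hw.le]
  have h1 : Real.sqrt w ≠ 0 := (Real.sqrt_pos.2 hw).ne'
  have h2 : Real.Gamma (w/2) ≠ 0 := (Real.Gamma_pos_of_pos (by positivity)).ne'
  have h3 : Real.sqrt π ≠ 0 := (Real.sqrt_pos.2 Real.pi_pos).ne'
  field_simp

lemma tCDF_eq {w : ℝ} (hw : 3 ≤ w) {β : ℝ} (hβ0 : 0 ≤ β) (hβ : β < π/2) :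
    tCDF w (Real.sqrt w * Real.tan β)
      = Real.Gamma ((w+1)/2) / (Real.sqrt π * Real.Gamma (w/2)) *
        ((∫ θ in (0:ℝ)..(π/2), Real.cos θ ^ (w-1)) + ∫ θ in (0:ℝ)..β, Real.cos θ ^ (w-1)) := by
  have hw0 : (0:ℝ) < w := by linarith
  set c := Real.Gamma ((w+1)/2) / (Real.sqrt (w*π) * Real.Gamma (w/2)) with hc
  have hfg : tDensity w = fun x => c * (1 + x^2/w) ^ (-((w+1)/2)) := rfl
  have hgi := g_integrable (w := w) (by linarith)
  have hfi : Integrable (tDensity w) := by rw [hfg]; exact hgi.const_mul c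
  have heven : ∀ x : ℝ, tDensity w (-x) = tDensity w x := by
    intro x; simp only [tDensity, neg_sq]
  have hIic0 : ∫ x in Set.Iic (0:ℝ), tDensity w x = (1/2) * ∫ x, tDensity w x :=
    even_Iic hfi heven
  have htotal : ∫ x, tDensity w x
      = c * Real.sqrt w * (2 * ∫ θ in (0:ℝ)..(π/2), Real.cos θ ^ (w-1)) := by
    rw [hfg, MeasureTheory.integral_const_mul, total_sub hw0, cos_even_split (by linarith)]
    ring
  have hint : ∫ x in (0:ℝ)..(Real.sqrt w * Real.tan β), tDensity w x
      = c * Real.sqrt w * ∫ θ in (0:ℝ)..β, Real.cos θ ^ (w-1) := by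
    rw [hfg]
    rw [intervalIntegral.integral_const_mul, density_sub hw0 hβ0 hβ]
    ring
  have hsplit := intervalIntegral.integral_Iic_sub_Iic
    (hfi.integrableOn) (hfi.integrableOn) (μ := volume)
    (a := 0) (b := Real.sqrt w * Real.tan β)
  have : tCDF w (Real.sqrt w * Real.tan β)
      = (∫ x in Set.Iic (0:ℝ), tDensity w x)
        + ∫ x in (0:ℝ)..(Real.sqrt w * Real.tan β), tDensity w x := by
    rw [tCDF, ← hsplit]; ring
  rw [this, hIic0, htotal, hint, ← K_const hw0, ← hc]
  ring

lemma G_sub {v y : ℝ} (hv : 3 ≤ v) (hy : 0 < y) :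
    ∫ x in (1:ℝ)..Real.sqrt (v/(v-2)), ((v + y^2)/(v + y^2 * x^2)) ^ ((v+1)/2)
      = (Real.cos (Real.arctan (y/Real.sqrt v)) ^ v
          * Real.sin (Real.arctan (y/Real.sqrt v)))⁻¹
        * ∫ θ in (Real.arctan (y/Real.sqrt v))..(Real.arctan (y/Real.sqrt (v-2))),
            Real.cos θ ^ (v-1) := by
  have hv0 : (0:ℝ) < v := by linarith
  have hv2 : (0:ℝ) < v - 2 := by linarith
  have hsv : 0 < Real.sqrt v := Real.sqrt_pos.2 hv0
  have hsv2 : 0 < Real.sqrt (v-2) := Real.sqrt_pos.2 hv2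
  set φ := Real.arctan (y/Real.sqrt v) with hφdef
  set ψ := Real.arctan (y/Real.sqrt (v-2)) with hψdef
  have hk : (0:ℝ) < Real.sqrt v / y := by positivity
  have hφ0 : 0 ≤ φ := by
    rw [hφdef, ← Real.arctan_zero]
    exact Real.arctan_strictMono.monotone (by positivity)
  have hψlt : ψ < π/2 := Real.arctan_lt_pi_div_two _
  have hφψ : φ ≤ ψ := by
    apply Real.arctan_strictMono.monotone
    apply div_le_div_of_nonneg_left hy.le hsv2
    exact Real.sqrt_le_sqrt (by linarith)
  have h1 : (1:ℝ) = (Real.sqrt v / y) * Real.tan φ := by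
    rw [hφdef, Real.tan_arctan]; field_simp
  have h2 : Real.sqrt (v/(v-2)) = (Real.sqrt v / y) * Real.tan ψ := by
    rw [hψdef, Real.tan_arctan, Real.sqrt_div hv0.le]
    field_simp
  have hgc : Continuous fun x : ℝ => ((v + y^2)/(v + y^2 * x^2)) ^ ((v+1)/2) := by
    apply Continuous.rpow_const
    · apply Continuous.div continuous_const (by continuity)
      intro x; positivity
    · intro x; right; positivity
  calc ∫ x in (1:ℝ)..Real.sqrt (v/(v-2)), ((v + y^2)/(v + y^2 * x^2)) ^ ((v+1)/2)
      = ∫ x in ((Real.sqrt v / y) * Real.tan φ)..((Real.sqrt v / y) * Real.tan ψ),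
          ((v + y^2)/(v + y^2 * x^2)) ^ ((v+1)/2) := by rw [← h1, ← h2]
    _ = ∫ θ in φ..ψ, (Real.sqrt v / y * (1 / Real.cos θ ^ 2)) *
          ((v + y^2)/(v + y^2 * ((Real.sqrt v / y) * Real.tan θ)^2)) ^ ((v+1)/2) :=
        tan_sub hk hφ0 hψlt hφψ hgc
    _ = ∫ θ in φ..ψ, (Real.cos φ ^ v * Real.sin φ)⁻¹ * Real.cos θ ^ (v-1) := by
        apply intervalIntegral.integral_congr
        intro θ hθ
        rw [Set.uIcc_of_le hφψ] at hθ
        have hcθ : 0 < Real.cos θ := Real.cos_pos_of_mem_Ioo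
          ⟨by nlinarith [hθ.1, hφ0, Real.pi_pos], lt_of_le_of_lt hθ.2 hψlt⟩
        exact G_integrand hv0 hy hcθ
    _ = (Real.cos φ ^ v * Real.sin φ)⁻¹ * ∫ θ in φ..ψ, Real.cos θ ^ (v-1) := by
        rw [intervalIntegral.integral_const_mul]

theorem stmt_6 (v y : ℝ) (hv : 3 ≤ v) (hy : 0 < y) :
    J (v + 2) y < J v y ↔ 1 < G v y := by
  have hv0 : (0:ℝ) < v := by linarith
  have hv2 : (0:ℝ) < v - 2 := by linarith
  have hsv : 0 < Real.sqrt v := Real.sqrt_pos.2 hv0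
  have hsv2 : 0 < Real.sqrt (v-2) := Real.sqrt_pos.2 hv2
  set φ := Real.arctan (y/Real.sqrt v) with hφdef
  set ψ := Real.arctan (y/Real.sqrt (v-2)) with hψdef
  have hφpos : 0 < φ := by
    rw [hφdef, ← Real.arctan_zero]
    exact Real.arctan_strictMono (by positivity)
  have hφ0 : 0 ≤ φ := hφpos.le
  have hψlt : ψ < π/2 := Real.arctan_lt_pi_div_two _
  have hφlt : φ < π/2 := Real.arctan_lt_pi_div_two _
  have hφψ : φ ≤ ψ := by
    apply Real.arctan_strictMono.monotone
    apply div_le_div_of_nonneg_left hy.le hsv2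
    exact Real.sqrt_le_sqrt (by linarith)
  have hψ0 : 0 ≤ ψ := le_trans hφ0 hφψ
  -- endpoints
  have ha1 : y * Real.sqrt (v/(v-2)) = Real.sqrt v * Real.tan ψ := by
    rw [hψdef, Real.tan_arctan, Real.sqrt_div hv0.le]; ring
  have ha2 : y * Real.sqrt ((v+2)/v) = Real.sqrt (v+2) * Real.tan φ := by
    rw [hφdef, Real.tan_arctan, Real.sqrt_div (by linarith : (0:ℝ) ≤ v+2)]; ring
  -- CDF formulas
  have hcdf1 := tCDF_eq hv hψ0 hψlt
  have hcdf2 := tCDF_eq (w := v+2) (by linarith) hφ0 hφlt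
  rw [show v + 2 - 1 = v + 1 from by ring] at hcdf2
  -- positivity of constants
  have hKpos : 0 < Real.Gamma ((v+1)/2) / (Real.sqrt π * Real.Gamma (v/2)) :=
    div_pos (Real.Gamma_pos_of_pos (by linarith))
      (mul_pos (Real.sqrt_pos.2 Real.pi_pos) (Real.Gamma_pos_of_pos (by positivity)))
  -- K recurrence
  have hK2 : v * (Real.Gamma ((v+2+1)/2) / (Real.sqrt π * Real.Gamma ((v+2)/2)))
      = (v+1) * (Real.Gamma ((v+1)/2) / (Real.sqrt π * Real.Gamma (v/2))) := by
    have hg1 : Real.Gamma (v/2) ≠ 0 := (Real.Gamma_pos_of_pos (by linarith)).ne'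
    have hg2 : Real.Gamma ((v+1)/2) ≠ 0 := (Real.Gamma_pos_of_pos (by linarith)).ne'
    have hg3 : Real.sqrt π ≠ 0 := (Real.sqrt_pos.2 Real.pi_pos).ne'
    rw [show (v+2+1)/2 = (v+1)/2 + 1 from by ring, show (v+2)/2 = v/2 + 1 from by ring,
      Real.Gamma_add_one (ne_of_gt (by linarith : (0:ℝ) < (v+1)/2)),
      Real.Gamma_add_one (ne_of_gt (by linarith : (0:ℝ) < v/2))]
    field_simp
  -- FTC
  have hc1 : Continuous fun θ : ℝ => Real.cos θ ^ (v-1) :=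
    (continuous_rpow_const_pos (by linarith)).comp Real.continuous_cos
  have hc2 : Continuous fun θ : ℝ => Real.cos θ ^ (v+1) :=
    (continuous_rpow_const_pos (by linarith)).comp Real.continuous_cos
  have ftc : ∀ T : ℝ, 0 ≤ T → T ≤ π/2 →
      (v+1) * (∫ θ in (0:ℝ)..T, Real.cos θ ^ (v+1))
        - v * ∫ θ in (0:ℝ)..T, Real.cos θ ^ (v-1)
      = Real.cos T ^ v * Real.sin T := by
    intro T h0 h1
    rw [← intervalIntegral.integral_const_mul, ← intervalIntegral.integral_const_mul,
      ← intervalIntegral.integral_sub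
        (show IntervalIntegrable (fun θ => (v+1) * Real.cos θ ^ (v+1)) MeasureTheory.volume 0 T from
          (continuous_const.mul hc2).intervalIntegrable _ _)
        (show IntervalIntegrable (fun θ => v * Real.cos θ ^ (v-1)) MeasureTheory.volume 0 T from
          (continuous_const.mul hc1).intervalIntegrable _ _)]
    exact cospow_ftc v hv h0 h1
  have f1 := ftc (π/2) (by positivity) le_rfl
  rw [Real.cos_pi_div_two, Real.sin_pi_div_two, Real.zero_rpow hv0.ne', mul_one] at f1
  have f2 := ftc φ hφ0 hφlt.le
  have f3 : (∫ θ in (0:ℝ)..φ, Real.cos θ ^ (v-1))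
      + (∫ θ in φ..ψ, Real.cos θ ^ (v-1)) = ∫ θ in (0:ℝ)..ψ, Real.cos θ ^ (v-1) :=
    intervalIntegral.integral_add_adjacent_intervals
      (hc1.intervalIntegrable _ _) (hc1.intervalIntegrable _ _)
  -- G value
  have hGv : G v y = v * ((Real.cos φ ^ v * Real.sin φ)⁻¹
      * ∫ θ in φ..ψ, Real.cos θ ^ (v-1)) := by
    rw [G, G_sub hv hy]
  -- positivity
  have hcφ : 0 < Real.cos φ := hφdef ▸ Real.cos_arctan_pos _
  have hsφ : 0 < Real.sin φ :=
    Real.sin_pos_of_pos_of_lt_pi hφpos (by linarith [Real.pi_pos])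
  have hPpos : 0 < Real.cos φ ^ v * Real.sin φ :=
    mul_pos (Real.rpow_pos_of_pos hcφ v) hsφ
  -- J values
  have hJ1 : J v y = 2 * (Real.Gamma ((v+1)/2) / (Real.sqrt π * Real.Gamma (v/2)) *
      ((∫ θ in (0:ℝ)..(π/2), Real.cos θ ^ (v-1)) + ∫ θ in (0:ℝ)..ψ, Real.cos θ ^ (v-1))) - 1 := by
    rw [J, ha1, hcdf1]
  have hJ2 : J (v+2) y = 2 * (Real.Gamma ((v+2+1)/2) / (Real.sqrt π * Real.Gamma ((v+2)/2)) *
      ((∫ θ in (0:ℝ)..(π/2), Real.cos θ ^ (v+1)) + ∫ θ in (0:ℝ)..φ, Real.cos θ ^ (v+1))) - 1 := by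
    rw [J, show v + 2 - 2 = v from by ring, ha2, hcdf2]
  -- difference identity
  have hdiff : v * (J v y - J (v+2) y)
      = 2 * (Real.Gamma ((v+1)/2) / (Real.sqrt π * Real.Gamma (v/2)))
        * (v * (∫ θ in φ..ψ, Real.cos θ ^ (v-1)) - Real.cos φ ^ v * Real.sin φ) := by
    rw [hJ1, hJ2]
    linear_combination (-2 * ((∫ θ in (0:ℝ)..(π/2), Real.cos θ ^ (v+1))
        + ∫ θ in (0:ℝ)..φ, Real.cos θ ^ (v+1))) * hK2
      - (2 * (Real.Gamma ((v+1)/2) / (Real.sqrt π * Real.Gamma (v/2)))) * f1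
      - (2 * (Real.Gamma ((v+1)/2) / (Real.sqrt π * Real.Gamma (v/2)))) * f2
      - (2 * v * (Real.Gamma ((v+1)/2) / (Real.sqrt π * Real.Gamma (v/2)))) * f3
  -- conclude
  have hGP : (Real.cos φ ^ v * Real.sin φ) * G v y
      = v * ∫ θ in φ..ψ, Real.cos θ ^ (v-1) := by
    rw [hGv]; field_simp
  have h2K : 0 < 2 * (Real.Gamma ((v+1)/2) / (Real.sqrt π * Real.Gamma (v/2))) := by linarith
  constructor
  · intro h
    have h0 : 0 < v * (J v y - J (v+2) y) := mul_pos hv0 (by linarith)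
    rw [hdiff] at h0
    have h1 : Real.cos φ ^ v * Real.sin φ < v * ∫ θ in φ..ψ, Real.cos θ ^ (v-1) := by
      rcases mul_pos_iff.mp h0 with ⟨_, hb⟩ | ⟨ha, _⟩
      · linarith
      · linarith
    have h2 : (Real.cos φ ^ v * Real.sin φ) * 1 < (Real.cos φ ^ v * Real.sin φ) * G v y := by
      rw [mul_one, hGP]; exact h1
    exact (mul_lt_mul_iff_right₀ hPpos).mp h2
  · intro h
    have h1 : (Real.cos φ ^ v * Real.sin φ) * 1 < (Real.cos φ ^ v * Real.sin φ) * G v y :=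
      (mul_lt_mul_iff_right₀ hPpos).2 h
    rw [mul_one, hGP] at h1
    have h0 : 0 < v * (J v y - J (v+2) y) := by
      rw [hdiff]
      exact mul_pos h2K (by linarith)
    have hd : 0 < J v y - J (v+2) y := by
      rcases mul_pos_iff.mp h0 with ⟨_, hb⟩ | ⟨ha, _⟩
      · linarith
      · linarith
    linarith
end

section
/- Let v ≥ 3 be a real number and y > 0. Then J_{v+2}(y) > J_v(y) if and only if G(v,y) < 1, where J_v(y) := 2·F_v(y·√(v/(v−2))) − 1 and G(v,y) := v·∫_1^{√(v/(v−2))} ((v+y²)/(v+y²x²))^{(v+1)/2} dx. -/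
open MeasureTheory Real intervalIntegral Filter Topology

noncomputable def tC (v : ℝ) : ℝ :=
  Real.Gamma ((v + 1) / 2) / (Real.sqrt (v * π) * Real.Gamma (v / 2))

lemma tDensity_eq (v x : ℝ) : tDensity v x = tC v * (1 + x ^ 2 / v) ^ (-((v + 1) / 2)) := rfl

lemma tC_pos {v : ℝ} (hv : 0 < v) : 0 < tC v := by
  have h1 : 0 < Real.Gamma ((v + 1) / 2) := Real.Gamma_pos_of_pos (by linarith)
  have h2 : 0 < Real.Gamma (v / 2) := Real.Gamma_pos_of_pos (by linarith)
  have h3 : 0 < Real.sqrt (v * π) := Real.sqrt_pos.2 (by positivity)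
  exact div_pos h1 (by positivity)

lemma base_pos {v : ℝ} (hv : 0 < v) (x : ℝ) : 0 < 1 + x ^ 2 / v := by positivity

lemma tDensity_pos {v : ℝ} (hv : 0 < v) (x : ℝ) : 0 < tDensity v x := by
  rw [tDensity_eq]
  exact mul_pos (tC_pos hv) (Real.rpow_pos_of_pos (base_pos hv x) _)

lemma tDensity_continuous {v : ℝ} (hv : 0 < v) : Continuous (tDensity v) := by
  apply Continuous.mul continuous_const
  apply Continuous.rpow_const (by continuity)
  intro x
  exact Or.inl (ne_of_gt (base_pos hv x))

lemma tDensity_integrable {v : ℝ} (hv : 1 ≤ v) : Integrable (tDensity v) := by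
  have hv0 : 0 < v := by linarith
  have hbound : ∀ x : ℝ, ‖tDensity v x‖ ≤ tC v * v ^ ((v + 1) / 2) * (1 + x ^ 2)⁻¹ := by
    intro x
    rw [Real.norm_of_nonneg (tDensity_pos hv0 x).le, tDensity_eq]
    have h1 : (1 + x ^ 2) / v ≤ 1 + x ^ 2 / v := by
      rw [div_le_iff₀ hv0, add_mul, div_mul_cancel₀ _ hv0.ne']
      nlinarith [sq_nonneg x]
    have h2 : (0:ℝ) < (1 + x ^ 2) / v := by positivity
    have h3 : (1 + x ^ 2 / v) ^ (-((v + 1) / 2)) ≤ ((1 + x ^ 2) / v) ^ (-((v + 1) / 2)) :=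
      Real.rpow_le_rpow_of_nonpos h2 h1 (by linarith)
    have h4 : ((1 + x ^ 2) / v) ^ (-((v + 1) / 2)) =
        v ^ ((v + 1) / 2) * (1 + x ^ 2) ^ (-((v + 1) / 2)) := by
      rw [Real.div_rpow (by positivity) hv0.le, Real.rpow_neg (by positivity),
        Real.rpow_neg (by positivity)]
      field_simp
    have h5 : (1 + x ^ 2 : ℝ) ^ (-((v + 1) / 2)) ≤ (1 + x ^ 2) ^ (-1 : ℝ) :=
      Real.rpow_le_rpow_of_exponent_le (by nlinarith [sq_nonneg x]) (by linarith)
    rw [Real.rpow_neg_one] at h5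
    calc tC v * (1 + x ^ 2 / v) ^ (-((v + 1) / 2))
        ≤ tC v * (v ^ ((v + 1) / 2) * (1 + x ^ 2)⁻¹) := by
          apply mul_le_mul_of_nonneg_left _ (tC_pos hv0).le
          calc (1 + x ^ 2 / v) ^ (-((v + 1) / 2)) ≤ ((1 + x ^ 2) / v) ^ (-((v + 1) / 2)) := h3
            _ = v ^ ((v + 1) / 2) * (1 + x ^ 2) ^ (-((v + 1) / 2)) := h4
            _ ≤ v ^ ((v + 1) / 2) * (1 + x ^ 2)⁻¹ := by
                exact mul_le_mul_of_nonneg_left h5 (by positivity)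
      _ = tC v * v ^ ((v + 1) / 2) * (1 + x ^ 2)⁻¹ := by ring
  exact (integrable_inv_one_add_sq.const_mul _).mono'
    (tDensity_continuous hv0).aestronglyMeasurable (Filter.Eventually.of_forall hbound)

lemma tCDF_eq_s7 {v : ℝ} (hv : 1 ≤ v) (t : ℝ) :
    tCDF v t = tCDF v 0 + ∫ x in (0:ℝ)..t, tDensity v x := by
  have h := integral_Iic_sub_Iic ((tDensity_integrable hv).integrableOn)
    ((tDensity_integrable hv).integrableOn) (a := 0) (b := t)
  unfold tCDF
  linarith [h]

lemma tCDF_hasDerivAt {v : ℝ} (hv : 1 ≤ v) (t : ℝ) :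
    HasDerivAt (tCDF v) (tDensity v t) t := by
  have hv0 : 0 < v := by linarith
  have h : HasDerivAt (fun u => tCDF v 0 + ∫ x in (0:ℝ)..u, tDensity v x) (tDensity v t) t := by
    apply HasDerivAt.const_add
    exact intervalIntegral.integral_hasDerivAt_right
      ((tDensity_integrable hv).intervalIntegrable)
      (tDensity_continuous hv0).aestronglyMeasurable.stronglyMeasurableAtFilter
      (tDensity_continuous hv0).continuousAt
  exact h.congr_of_eventuallyEq (Filter.Eventually.of_forall fun u => tCDF_eq_s7 hv u)

lemma tCDF_mono {v : ℝ} (hv : 1 ≤ v) : Monotone (tCDF v) := by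
  intro a b hab
  rw [tCDF_eq_s7 hv a, tCDF_eq_s7 hv b]
  have : (0:ℝ) ≤ ∫ x in a..b, tDensity v x :=
    intervalIntegral.integral_nonneg hab fun x _ => (tDensity_pos (by linarith) x).le
  have h := intervalIntegral.integral_add_adjacent_intervals (a := (0:ℝ)) (b := a) (c := b)
    ((tDensity_integrable hv).intervalIntegrable)
    ((tDensity_integrable hv).intervalIntegrable)
  linarith [h]

lemma tCDF_nonneg {v : ℝ} (hv : 1 ≤ v) (t : ℝ) : 0 ≤ tCDF v t :=
  setIntegral_nonneg measurableSet_Iic fun x _ => (tDensity_pos (by linarith) x).le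

lemma tCDF_tendsto_atBot {v : ℝ} (hv : 1 ≤ v) : Tendsto (tCDF v) atBot (𝓝 0) := by
  have hbdd : BddBelow (Set.range (tCDF v)) :=
    ⟨0, fun x ⟨t, ht⟩ => ht ▸ tCDF_nonneg hv t⟩
  have hmain := tendsto_atBot_ciInf (tCDF_mono hv) hbdd
  have hseq : Tendsto (fun n : ℕ => tCDF v (-(n:ℝ))) atTop (𝓝 (⨅ t, tCDF v t)) :=
    hmain.comp (tendsto_neg_atBot_iff.mpr tendsto_natCast_atTop_atTop)
  have hseq0 : Tendsto (fun n : ℕ => tCDF v (-(n:ℝ))) atTop (𝓝 0) := by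
    have h1 : Tendsto (fun n : ℕ => ∫ x in Set.Iic (-(n:ℝ)), tDensity v x) atTop
        (𝓝 (∫ x in ⋂ n : ℕ, Set.Iic (-(n:ℝ)), tDensity v x)) := by
      apply Antitone.tendsto_setIntegral (fun n => measurableSet_Iic)
      · intro a b hab
        exact Set.Iic_subset_Iic.2 (by exact_mod_cast neg_le_neg (by exact_mod_cast hab))
      · exact (tDensity_integrable hv).integrableOn
    have h2 : (⋂ n : ℕ, Set.Iic (-(n:ℝ))) = ∅ := by
      ext x
      simp only [Set.mem_iInter, Set.mem_Iic, Set.mem_empty_iff_false, iff_false, not_forall,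
        not_le]
      obtain ⟨n, hn⟩ := exists_nat_gt (-x)
      exact ⟨n, by linarith⟩
    rw [h2] at h1
    simpa [tCDF] using h1
  have := tendsto_nhds_unique hseq hseq0
  rwa [this] at hmain

lemma tDensity_hasDerivAt {v : ℝ} (hv : 0 < v) (y : ℝ) :
    HasDerivAt (tDensity v)
      (tC v * (-((v + 1) / 2) * (1 + y ^ 2 / v) ^ (-((v + 3) / 2)) * (2 * y / v))) y := by
  have hb : (0:ℝ) < 1 + y ^ 2 / v := base_pos hv y
  have h1 : HasDerivAt (fun x : ℝ => 1 + x ^ 2 / v) (2 * y / v) y := by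
    have := ((hasDerivAt_pow 2 y).div_const v).const_add 1
    simpa using this
  have h2 : HasDerivAt (fun x : ℝ => (1 + x ^ 2 / v) ^ (-((v + 1) / 2)))
      (-((v + 1) / 2) * (1 + y ^ 2 / v) ^ (-((v + 1) / 2) - 1) * (2 * y / v)) y := by
    have := (Real.hasDerivAt_rpow_const (p := -((v + 1) / 2)) (Or.inl hb.ne')).comp y h1
    simpa [Function.comp_def, mul_comm, mul_assoc, mul_left_comm] using this
  have h3 : (-((v + 1) / 2) : ℝ) - 1 = -((v + 3) / 2) := by ring
  rw [h3] at h2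
  have := h2.const_mul (tC v)
  simpa [tDensity_eq, mul_assoc,
    show tDensity v = fun y => tC v * (1 + y ^ 2 / v) ^ (-((v + 1) / 2)) from rfl] using this

lemma const_identity {v : ℝ} (hv : 0 < v) :
    Real.sqrt ((v + 2) / v) * tC (v + 2) = (v + 1) / v * tC v := by
  have hπ : (0:ℝ) < π := Real.pi_pos
  have hs1 : Real.sqrt ((v + 2) / v) * Real.sqrt (v * π) = Real.sqrt ((v + 2) * π) := by
    rw [← Real.sqrt_mul (by positivity)]
    congr 1
    field_simp
  have hΓ1 : Real.Gamma ((v + 2 + 1) / 2) = (v + 1) / 2 * Real.Gamma ((v + 1) / 2) := by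
    have : (v + 2 + 1) / 2 = (v + 1) / 2 + 1 := by ring
    rw [this, Real.Gamma_add_one (by positivity)]
  have hΓ2 : Real.Gamma ((v + 2) / 2) = v / 2 * Real.Gamma (v / 2) := by
    have : (v + 2) / 2 = v / 2 + 1 := by ring
    rw [this, Real.Gamma_add_one (by positivity)]
  have hΓv : Real.Gamma (v / 2) ≠ 0 := (Real.Gamma_pos_of_pos (by positivity)).ne'
  have hsv : Real.sqrt (v * π) ≠ 0 := (Real.sqrt_pos.2 (by positivity)).ne'
  have hsv2 : Real.sqrt ((v + 2) * π) ≠ 0 := (Real.sqrt_pos.2 (by positivity)).ne'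
  unfold tC
  rw [hΓ1, hΓ2]
  have hs : Real.sqrt ((v + 2) / v) = Real.sqrt ((v + 2) * π) / Real.sqrt (v * π) := by
    rw [eq_div_iff hsv]; exact hs1
  rw [hs]
  field_simp

lemma tail_tendsto {v : ℝ} (hv : 3 ≤ v) :
    Tendsto (fun y => y / v * tDensity v y) atBot (𝓝 0) := by
  have hv0 : (0:ℝ) < v := by linarith
  have hbound : ∀ y : ℝ, y ≤ -1 → ‖y / v * tDensity v y‖ ≤ tC v * v * |y|⁻¹ := by
    intro y hy
    have hy1 : 1 ≤ |y| := by rw [abs_of_nonpos (by linarith)]; linarith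
    have hy0 : y ≠ 0 := by intro h; rw [h] at hy; linarith
    have hb : (0:ℝ) < 1 + y ^ 2 / v := base_pos hv0 y
    have hb1 : (1:ℝ) ≤ 1 + y ^ 2 / v := by have := div_nonneg (sq_nonneg y) hv0.le; linarith
    have hq : (0:ℝ) < y ^ 2 / v := by positivity
    have h1 : (1 + y ^ 2 / v) ^ (-((v + 1) / 2)) ≤ (1 + y ^ 2 / v) ^ (-(2:ℝ)) :=
      Real.rpow_le_rpow_of_exponent_le hb1 (by linarith)
    have h2 : (1 + y ^ 2 / v) ^ (-(2:ℝ)) ≤ (y ^ 2 / v) ^ (-(2:ℝ)) :=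
      Real.rpow_le_rpow_of_nonpos hq (by linarith) (by norm_num)
    have h3 : (y ^ 2 / v) ^ (-(2:ℝ)) = v ^ 2 / y ^ 4 := by
      rw [Real.rpow_neg hq.le, show (2:ℝ) = ((2:ℕ):ℝ) by norm_num, Real.rpow_natCast,
        div_pow, inv_div]
      congr 1
      ring
    have hdens : tDensity v y ≤ tC v * (v ^ 2 / y ^ 4) := by
      rw [tDensity_eq]
      have := h1.trans (h2.trans_eq h3)
      exact mul_le_mul_of_nonneg_left this (tC_pos hv0).le
    have hnorm : ‖y / v * tDensity v y‖ = |y| / v * tDensity v y := by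
      rw [norm_mul, Real.norm_of_nonneg (tDensity_pos hv0 y).le, norm_div,
        Real.norm_of_nonneg hv0.le, Real.norm_eq_abs]
    rw [hnorm]
    have hy4 : (0:ℝ) < y ^ 4 := by positivity
    calc |y| / v * tDensity v y ≤ |y| / v * (tC v * (v ^ 2 / y ^ 4)) := by
          exact mul_le_mul_of_nonneg_left hdens (by positivity)
      _ = tC v * v * (|y| / y ^ 4) := by field_simp
      _ ≤ tC v * v * |y|⁻¹ := by
          apply mul_le_mul_of_nonneg_left _ (mul_nonneg (tC_pos hv0).le hv0.le)
          rw [div_le_iff₀ hy4, inv_mul_eq_div, le_div_iff₀ (by positivity : (0:ℝ) < |y|)]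
          have : y ^ 4 = |y| ^ 4 := by rw [← abs_pow, abs_of_nonneg (by positivity)]
          rw [this]
          have h5 : 1 ≤ |y| ^ 2 := by nlinarith
          nlinarith [h5, abs_nonneg y, sq_nonneg (|y| ^ 2 - 1)]
  have hg : Tendsto (fun y : ℝ => tC v * v * |y|⁻¹) atBot (𝓝 0) := by
    have h1 : Tendsto (fun y : ℝ => |y|⁻¹) atBot (𝓝 0) :=
      tendsto_inv_atTop_zero.comp tendsto_abs_atBot_atTop
    simpa using h1.const_mul (tC v * v)
  exact squeeze_zero_norm' (eventually_atBot.2 ⟨-1, hbound⟩) hg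

lemma phi_hasDerivAt {v : ℝ} (hv : 3 ≤ v) (y : ℝ) :
    HasDerivAt (fun y => tCDF (v + 2) (Real.sqrt ((v + 2) / v) * y) - tCDF v y
      - y / v * tDensity v y) 0 y := by
  have hv0 : (0:ℝ) < v := by linarith
  set s := Real.sqrt ((v + 2) / v) with hs_def
  have hs2 : s ^ 2 = (v + 2) / v := Real.sq_sqrt (by positivity)
  have hb : (0:ℝ) < 1 + y ^ 2 / v := base_pos hv0 y
  -- derivative of first term
  have hd1 : HasDerivAt (fun y => tCDF (v + 2) (s * y)) (s * tDensity (v + 2) (s * y)) y := by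
    have h := (tCDF_hasDerivAt (v := v + 2) (by linarith) (s * y)).comp y
      ((hasDerivAt_id y).const_mul s)
    simp only [Function.comp_def, id_eq, mul_one] at h
    rw [mul_comm s (tDensity (v + 2) (s * y))]
    exact h
  -- derivative of third term
  have hd3 : HasDerivAt (fun y => y / v * tDensity v y)
      (1 / v * tDensity v y +
        y / v * (tC v * (-((v + 1) / 2) * (1 + y ^ 2 / v) ^ (-((v + 3) / 2)) * (2 * y / v)))) y := by
    exact ((hasDerivAt_id y).div_const v).mul (tDensity_hasDerivAt hv0 y)
  have htotal := (hd1.sub (tCDF_hasDerivAt (by linarith : (1:ℝ) ≤ v) y)).sub hd3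
  refine htotal.congr_deriv ?_
  -- now show the derivative is zero
  have harg : 1 + (s * y) ^ 2 / (v + 2) = 1 + y ^ 2 / v := by
    rw [mul_pow, hs2]
    congr 1
    field_simp
  have hdv2 : tDensity (v + 2) (s * y) = tC (v + 2) * (1 + y ^ 2 / v) ^ (-((v + 3) / 2)) := by
    rw [tDensity_eq, harg, show -((v + 2 + 1) / 2) = -((v + 3) / 2) by ring]
  have hrpow : (1 + y ^ 2 / v) ^ (-((v + 1) / 2)) =
      (1 + y ^ 2 / v) ^ (-((v + 3) / 2)) * (1 + y ^ 2 / v) := by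
    rw [show -((v + 1) / 2) = -((v + 3) / 2) + 1 by ring, Real.rpow_add_one hb.ne']
  have hconst := const_identity hv0
  rw [hdv2, tDensity_eq, hrpow]
  rw [← mul_assoc, hconst]
  field_simp
  ring

lemma key_identity {v : ℝ} (hv : 3 ≤ v) (y : ℝ) :
    tCDF (v + 2) (Real.sqrt ((v + 2) / v) * y) = tCDF v y + y / v * tDensity v y := by
  have hv0 : (0:ℝ) < v := by linarith
  set φ : ℝ → ℝ := fun y => tCDF (v + 2) (Real.sqrt ((v + 2) / v) * y) - tCDF v y
    - y / v * tDensity v y with hφ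
  have hderiv : ∀ x, HasDerivAt φ 0 x := phi_hasDerivAt hv
  have hconst : ∀ x z : ℝ, φ x = φ z :=
    is_const_of_deriv_eq_zero (fun x => (hderiv x).differentiableAt)
      (fun x => (hderiv x).deriv)
  have hs_pos : 0 < Real.sqrt ((v + 2) / v) := Real.sqrt_pos.2 (by positivity)
  have hlim : Tendsto φ atBot (𝓝 0) := by
    have h1 : Tendsto (fun y : ℝ => Real.sqrt ((v + 2) / v) * y) atBot atBot :=
      tendsto_id.const_mul_atBot hs_pos
    have h2 : Tendsto (fun y => tCDF (v + 2) (Real.sqrt ((v + 2) / v) * y)) atBot (𝓝 0) :=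
      (tCDF_tendsto_atBot (by linarith : (1:ℝ) ≤ v + 2)).comp h1
    have h3 := tCDF_tendsto_atBot (by linarith : (1:ℝ) ≤ v)
    have h4 := tail_tendsto hv
    have := (h2.sub h3).sub h4
    simpa using this
  have hc : ∀ x, φ x = 0 := by
    intro x
    have : Tendsto φ atBot (𝓝 (φ x)) := by
      have : φ = fun _ => φ x := funext fun z => hconst z x
      rw [this]
      exact tendsto_const_nhds
    exact tendsto_nhds_unique this hlim
  have := hc y
  rw [hφ] at this
  linarith [this]

lemma ratio_eq {v y : ℝ} (hv : 0 < v) (hy : y ≠ 0) (x : ℝ) :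
    ((v + y ^ 2) / (v + y ^ 2 * x ^ 2)) ^ ((v + 1) / 2) =
      tDensity v (y * x) / tDensity v y := by
  have hb1 : (0:ℝ) < 1 + (y * x) ^ 2 / v := base_pos hv _
  have hb2 : (0:ℝ) < 1 + y ^ 2 / v := base_pos hv y
  rw [tDensity_eq, tDensity_eq, mul_div_mul_left _ _ (tC_pos hv).ne']
  rw [Real.rpow_neg hb1.le, Real.rpow_neg hb2.le, inv_div_inv,
    ← Real.div_rpow hb2.le hb1.le]
  congr 1
  rw [mul_pow]
  rw [div_eq_div_iff (by positivity) (by positivity)]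
  field_simp

lemma G_eq {v y : ℝ} (hv : 3 ≤ v) (hy : 0 < y) :
    G v y = v * (tCDF v (y * Real.sqrt (v / (v - 2))) - tCDF v y) / (y * tDensity v y) := by
  have hv0 : (0:ℝ) < v := by linarith
  have hfy : (0:ℝ) < tDensity v y := tDensity_pos hv0 y
  set σ : ℝ := Real.sqrt (v / (v - 2)) with hσ
  have hint : (∫ x in (1:ℝ)..σ, ((v + y ^ 2) / (v + y ^ 2 * x ^ 2)) ^ ((v + 1) / 2)) =
      ∫ x in (1:ℝ)..σ, tDensity v (y * x) / tDensity v y := by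
    apply intervalIntegral.integral_congr
    intro x _
    exact ratio_eq hv0 hy.ne' x
  have hcomp : (∫ x in (1:ℝ)..σ, tDensity v (y * x)) =
      y⁻¹ • ∫ x in (y * 1)..(y * σ), tDensity v x :=
    intervalIntegral.integral_comp_mul_left (tDensity v) hy.ne'
  have hIic : (∫ x in (y * 1)..(y * σ), tDensity v x) =
      tCDF v (y * σ) - tCDF v (y * 1) := by
    exact (integral_Iic_sub_Iic ((tDensity_integrable (by linarith)).integrableOn)
      ((tDensity_integrable (by linarith)).integrableOn)).symm
  unfold G
  rw [hint]
  simp_rw [div_eq_mul_inv (tDensity v _), intervalIntegral.integral_mul_const]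
  rw [hcomp, hIic, mul_one, smul_eq_mul]
  field_simp

theorem stmt_7 (v y : ℝ) (hv : 3 ≤ v) (hy : 0 < y) :
    J v y < J (v + 2) y ↔ G v y < 1 := by
  have hv0 : (0:ℝ) < v := by linarith
  have hfy : (0:ℝ) < tDensity v y := tDensity_pos hv0 y
  have hJ2 : J (v + 2) y = 2 * (tCDF v y + y / v * tDensity v y) - 1 := by
    unfold J
    rw [show v + 2 - 2 = v by ring, mul_comm y (Real.sqrt ((v + 2) / v)), key_identity hv y]
  have hG := G_eq hv hy
  rw [hJ2]
  unfold J
  have heq : v * (y / v * tDensity v y) = y * tDensity v y := by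
    field_simp
  constructor
  · intro h
    rw [hG, div_lt_one (by positivity)]
    have h2 : tCDF v (y * Real.sqrt (v / (v - 2))) - tCDF v y < y / v * tDensity v y := by
      linarith
    have h3 := mul_lt_mul_of_pos_left h2 hv0
    rw [mul_sub] at h3
    rw [mul_sub]
    linarith
  · intro h
    rw [hG, div_lt_one (by positivity)] at h
    rw [mul_sub] at h
    have h3 : v * (tCDF v (y * Real.sqrt (v / (v - 2))) - tCDF v y) <
        v * (y / v * tDensity v y) := by
      rw [mul_sub]
      linarith
    have h4 := lt_of_mul_lt_mul_left (by linarith [h3] :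
      v * (tCDF v (y * Real.sqrt (v / (v - 2))) - tCDF v y) < v * (y / v * tDensity v y)) hv0.le
    linarith
end

section
/- Let y > 1 be a real number, set a = y² and C₁ = 2y⁶ + (3/4)y⁴, and let V₁ = max{100, 8y²}. Then for every real v ≥ V₁ and every x with 1 ≤ x ≤ √(v/(v−2)), one has | ((v+1)/2)·ln((v+a)/(v+a·x²)) − (a/2)(1−x²) − (1/v)·((a²/4)(x⁴−1) − (a/2)(x²−1)) | < C₁/v². -/
open Real

set_option maxHeartbeats 1600000 in
private lemma stmt10_ring (v a x L : ℝ) (hv : v ≠ 0) (hva : v + a ≠ 0) :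
    (v + 1) / 2 * (-L) - a / 2 * (1 - x ^ 2)
      - 1 / v * (a ^ 2 / 4 * ((x ^ 2 - 1) ^ 2 + 2 * (x ^ 2 - 1)) - a / 2 * (x ^ 2 - 1))
    = -(a ^ 2 * (a - 1) * (x ^ 2 - 1) / (2 * v * (v + a))
        + a ^ 2 * (x ^ 2 - 1) ^ 2 * (v * (2 * a - 1) + a ^ 2) / (4 * v * (v + a) ^ 2))
      - (v + 1) / 2 * (L - (a * (x ^ 2 - 1) / (v + a)
          - (a * (x ^ 2 - 1) / (v + a)) ^ 2 / 2)) := by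
  field_simp
  ring

set_option maxHeartbeats 1000000 in
private lemma stmt10_b1 (a t v : ℝ) (ha1 : 1 < a) (ht0 : 0 ≤ t) (ht1 : t ≤ 1 / 49)
    (hav : 8 * a ≤ v) (hv100 : 100 ≤ v) :
    a ^ 2 * (a - 1) * t / (2 * v * (v + a)) ≤ a ^ 3 / (2 * v ^ 2) := by
  have ha0 : (0:ℝ) < a := by linarith
  have hv0 : (0:ℝ) < v := by linarith
  have hva : (0:ℝ) < v + a := by linarith
  rw [div_le_div_iff₀ (by positivity) (by positivity)]
  nlinarith [mul_nonneg (mul_nonneg (sq_nonneg a) ht0) hv0.le,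
    mul_le_mul_of_nonneg_left ht1 (mul_nonneg (mul_nonneg (sq_nonneg a)
      (by linarith : (0:ℝ) ≤ a - 1)) (by positivity : (0:ℝ) ≤ 2 * v ^ 2)),
    mul_pos (mul_pos ha0 ha0) (mul_pos ha0 hv0)]

set_option maxHeartbeats 1000000 in
private lemma stmt10_b2 (a t v : ℝ) (ha1 : 1 < a) (ht0 : 0 ≤ t) (ht1 : t ≤ 1 / 49)
    (hav : 8 * a ≤ v) (hv100 : 100 ≤ v) :
    a ^ 2 * t ^ 2 * (v * (2 * a - 1) + a ^ 2) / (4 * v * (v + a) ^ 2) ≤ a ^ 3 / (2 * v ^ 2) := by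
  have ha0 : (0:ℝ) < a := by linarith
  have hv0 : (0:ℝ) < v := by linarith
  have hva : (0:ℝ) < v + a := by linarith
  rw [div_le_div_iff₀ (by positivity) (by positivity)]
  have h2 : v * (2 * a - 1) + a ^ 2 ≤ 3 * a * v := by nlinarith
  have h3 : t ^ 2 ≤ 1 / 2401 := by nlinarith
  have h5 : a ^ 2 * t ^ 2 * (v * (2 * a - 1) + a ^ 2) ≤ a ^ 2 * (1 / 2401) * (3 * a * v) := by
    have := mul_le_mul (mul_le_mul_of_nonneg_left h3 (sq_nonneg a)) h2
      (by nlinarith) (by positivity)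
    linarith [this]
  have h9 : a ^ 3 * (4 * v * v ^ 2) ≤ a ^ 3 * (4 * v * (v + a) ^ 2) := by
    have hvv : v ^ 2 ≤ (v + a) ^ 2 := by nlinarith
    nlinarith [mul_le_mul_of_nonneg_left hvv (by positivity : (0:ℝ) ≤ a ^ 3 * (4 * v))]
  nlinarith [mul_le_mul_of_nonneg_right h5 (by positivity : (0:ℝ) ≤ 2 * v ^ 2), h9,
    mul_nonneg (pow_pos ha0 3).le (pow_pos hv0 3).le]

set_option maxHeartbeats 1000000 in
private lemma stmt10_b3 (a t v : ℝ) (ha1 : 1 < a) (ht0 : 0 ≤ t) (ht1 : t ≤ 1 / 49)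
    (hav : 8 * a ≤ v) (hv100 : 100 ≤ v) :
    (v + 1) * (a * t / (v + a)) ^ 3 ≤ a ^ 3 / (2 * v ^ 2) := by
  have ha0 : (0:ℝ) < a := by linarith
  have hv0 : (0:ℝ) < v := by linarith
  have hva : (0:ℝ) < v + a := by linarith
  have hs3 : (a * t / (v + a)) ^ 3 = a ^ 3 * t ^ 3 / (v + a) ^ 3 := by
    rw [div_pow, mul_pow]
  rw [hs3, ← mul_div_assoc, div_le_div_iff₀ (by positivity) (by positivity)]
  have h3a : t ^ 2 ≤ 1 / 2401 := by nlinarith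
  have h7 : t ^ 3 ≤ 1 / 117649 := by
    nlinarith [mul_le_mul_of_nonneg_left h3a ht0]
  have hint2 : v ^ 3 ≤ (v + a) ^ 3 := by
    exact pow_le_pow_left₀ hv0.le (by linarith) 3
  calc (v + 1) * (a ^ 3 * t ^ 3) * (2 * v ^ 2)
      = (a ^ 3 * ((v + 1) * 2 * v ^ 2)) * t ^ 3 := by ring
    _ ≤ (a ^ 3 * ((v + 1) * 2 * v ^ 2)) * (1 / 117649) :=
        mul_le_mul_of_nonneg_left h7 (by positivity)
    _ ≤ a ^ 3 * v ^ 3 := by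
        have h12 : (v + 1) * 2 * v ^ 2 ≤ 3 * v ^ 3 := by
          nlinarith [mul_le_mul_of_nonneg_right
            (by linarith : 2 * (v + 1) ≤ 3 * v) (sq_nonneg v)]
        nlinarith [mul_le_mul_of_nonneg_left h12 (pow_pos ha0 3).le,
          mul_nonneg (pow_pos ha0 3).le (pow_pos hv0 3).le]
    _ ≤ a ^ 3 * (v + a) ^ 3 := mul_le_mul_of_nonneg_left hint2 (pow_pos ha0 3).le

set_option maxHeartbeats 1600000 in
theorem stmt_10 (y a C₁ V₁ : ℝ) (hy : 1 < y)
    (ha : a = y ^ 2)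
    (hC₁ : C₁ = 2 * y ^ 6 + (3 / 4) * y ^ 4)
    (hV₁ : V₁ = max 100 (8 * y ^ 2)) :
    ∀ v : ℝ, V₁ ≤ v → ∀ x : ℝ, 1 ≤ x → x ≤ Real.sqrt (v / (v - 2)) →
      |((v + 1) / 2) * Real.log ((v + a) / (v + a * x ^ 2))
          - (a / 2) * (1 - x ^ 2)
          - (1 / v) * ((a ^ 2 / 4) * (x ^ 4 - 1) - (a / 2) * (x ^ 2 - 1))|
        < C₁ / v ^ 2 := by
  intro v hv x hx1 hx2
  have ha1 : 1 < a := by nlinarith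
  have ha0 : 0 < a := by linarith
  have hv100 : (100:ℝ) ≤ v := le_trans (le_max_left _ _) (hV₁ ▸ hv)
  have hav : 8 * a ≤ v := by
    have := le_trans (le_max_right _ _) (hV₁ ▸ hv); rw [ha]; linarith
  have hv0 : (0:ℝ) < v := by linarith
  have hv2 : (0:ℝ) < v - 2 := by linarith
  have hva : (0:ℝ) < v + a := by linarith
  have ht0 : 0 ≤ x ^ 2 - 1 := by nlinarith
  -- x^2 ≤ v/(v-2)
  have hx2' : x ^ 2 ≤ v / (v - 2) := by
    have h0 : 0 ≤ v / (v - 2) := by positivity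
    have := pow_le_pow_left₀ (by linarith : (0:ℝ) ≤ x) hx2 2
    rwa [Real.sq_sqrt h0] at this
  have htb : (x ^ 2 - 1) * (v - 2) ≤ 2 := by
    have h := (le_div_iff₀ hv2).mp hx2'
    nlinarith
  have ht1 : x ^ 2 - 1 ≤ 1 / 49 := by nlinarith
  set t : ℝ := x ^ 2 - 1 with htdef
  set s : ℝ := a * t / (v + a) with hsdef
  clear_value t
  have hs0 : 0 ≤ s := by positivity
  have hs49 : s ≤ 1 / 49 := by
    rw [hsdef, div_le_iff₀ hva]; nlinarith
  have h1s : (1 : ℝ) + s = (v + a * x ^ 2) / (v + a) := by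
    rw [hsdef, htdef]; field_simp; ring
  have hx2pos : 0 < v + a * x ^ 2 := by nlinarith
  have hlog : Real.log ((v + a) / (v + a * x ^ 2)) = - Real.log (1 + s) := by
    rw [h1s, Real.log_div (ne_of_gt hva) (ne_of_gt hx2pos),
      Real.log_div (ne_of_gt hx2pos) (ne_of_gt hva)]
    ring
  set E : ℝ := Real.log (1 + s) - (s - s ^ 2 / 2) with hEdef
  clear_value s E
  have hE : |E| ≤ s ^ 3 / (1 - s) := by
    have habs : |(-s)| < 1 := by rw [abs_neg, abs_of_nonneg hs0]; linarith
    have key := Real.abs_log_sub_add_sum_range_le habs 2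
    simp only [Finset.sum_range_succ, Finset.sum_range_zero] at key
    rw [abs_neg, abs_of_nonneg hs0] at key
    have h2 : (0:ℝ) + (-s) ^ (0+1) / ((0:ℕ) + 1) + (-s) ^ (1+1) / ((1:ℕ)+1) + Real.log (1 - -s)
        = E := by
      rw [show (1:ℝ) - -s = 1 + s by ring, hEdef]; push_cast; ring
    rw [h2] at key
    simpa using key
  have hE2 : |E| ≤ 2 * s ^ 3 := by
    refine le_trans hE ?_
    rw [div_le_iff₀ (by linarith : (0:ℝ) < 1 - s)]
    nlinarith [pow_nonneg hs0 3]
  set M1 : ℝ := a ^ 2 * (a - 1) * t / (2 * v * (v + a)) with hM1def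
  set M2 : ℝ := a ^ 2 * t ^ 2 * (v * (2 * a - 1) + a ^ 2) / (4 * v * (v + a) ^ 2) with hM2def
  clear_value M1 M2
  have hM1nn : 0 ≤ M1 := by
    rw [hM1def]
    exact div_nonneg (mul_nonneg (mul_nonneg (by positivity) (by linarith)) ht0) (by positivity)
  have hM2nn : 0 ≤ M2 := by
    rw [hM2def]
    exact div_nonneg (mul_nonneg (by positivity)
      (add_nonneg (mul_nonneg hv0.le (by linarith)) (sq_nonneg a))) (by positivity)
  have hkey : ((v + 1) / 2) * Real.log ((v + a) / (v + a * x ^ 2))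
      - (a / 2) * (1 - x ^ 2)
      - (1 / v) * ((a ^ 2 / 4) * (x ^ 4 - 1) - (a / 2) * (x ^ 2 - 1))
      = -(M1 + M2) - ((v + 1) / 2) * E := by
    rw [hlog, hM1def, hM2def, hEdef, hsdef, htdef,
      show x ^ 4 - 1 = (x ^ 2 - 1) ^ 2 + 2 * (x ^ 2 - 1) by ring]
    exact stmt10_ring v a x _ (ne_of_gt hv0) (ne_of_gt hva)
  rw [show a / 2 * (x ^ 2 - 1) = a / 2 * t by rw [htdef]] at hkey
  rw [hkey]
  have habs2 : |(-(M1 + M2) - ((v + 1) / 2) * E)| ≤ (M1 + M2) + ((v + 1) / 2) * |E| := by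
    rw [show -(M1 + M2) - ((v + 1) / 2) * E = -((M1 + M2) + ((v + 1) / 2) * E) by ring,
      abs_neg]
    calc |(M1 + M2) + ((v + 1) / 2) * E| ≤ |M1 + M2| + |((v + 1) / 2) * E| := abs_add_le _ _
      _ = (M1 + M2) + ((v + 1) / 2) * |E| := by
          rw [abs_of_nonneg (by linarith), abs_mul, abs_of_nonneg (by linarith : (0:ℝ) ≤ (v+1)/2)]
  have hM1b : M1 ≤ a ^ 3 / (2 * v ^ 2) := by
    rw [hM1def]; exact stmt10_b1 a t v ha1 ht0 ht1 hav hv100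
  have hM2b : M2 ≤ a ^ 3 / (2 * v ^ 2) := by
    rw [hM2def]; exact stmt10_b2 a t v ha1 ht0 ht1 hav hv100
  have hEb : ((v + 1) / 2) * |E| ≤ a ^ 3 / (2 * v ^ 2) := by
    have h6 : ((v + 1) / 2) * |E| ≤ (v + 1) * s ^ 3 := by
      have := mul_le_mul_of_nonneg_left hE2 (by linarith : (0:ℝ) ≤ (v+1)/2)
      linarith
    refine le_trans h6 ?_
    rw [hsdef]
    exact stmt10_b3 a t v ha1 ht0 ht1 hav hv100
  have hsum : (M1 + M2) + ((v + 1) / 2) * |E| ≤ (3 / 2 * a ^ 3) / v ^ 2 := by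
    have : a ^ 3 / (2 * v ^ 2) + a ^ 3 / (2 * v ^ 2) + a ^ 3 / (2 * v ^ 2)
        = (3 / 2 * a ^ 3) / v ^ 2 := by field_simp; ring
    linarith
  have hfin : (3 / 2 * a ^ 3) / v ^ 2 < C₁ / v ^ 2 := by
    rw [div_lt_div_iff_of_pos_right (by positivity)]
    rw [hC₁, ha]
    nlinarith [pow_pos (by linarith : (0:ℝ) < y) 4, pow_pos (by linarith : (0:ℝ) < y) 6]
  calc |(-(M1 + M2) - ((v + 1) / 2) * E)| ≤ (M1 + M2) + ((v + 1) / 2) * |E| := habs2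
    _ ≤ (3 / 2 * a ^ 3) / v ^ 2 := hsum
    _ < C₁ / v ^ 2 := hfin
end

section
/- Let y > 1 be a real number, set a = y², C₁ = 2y⁶ + (3/4)y⁴, C₂ = (9/4)C₁ + (25/32)y⁸ + (3/2)(C₁^{2/3}·y^{8/3} + C₁^{1/3}·y^{16/3}), V₁ = max{100, 8y²} and V₂ = max{V₁, (3/2)y⁴, √(2C₁)}. Then for every real v ≥ V₂ and every x with 1 ≤ x ≤ √(v/(v−2)), one has | ((v+a)/(v+a·x²))^{(v+1)/2} − e^{(a/2)(1−x²)}·(1 + ((a²/4)(x⁴−1) − (a/2)(x²−1))/v) | < e^{(a/2)(1−x²)}·C₂/v². -/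
open Real

set_option maxHeartbeats 1000000 in
theorem stmt_11 (y a C₁ C₂ V₁ V₂ : ℝ) (hy : 1 < y)
    (ha : a = y ^ 2)
    (hC₁ : C₁ = 2 * y ^ 6 + (3 / 4) * y ^ 4)
    (hC₂ : C₂ = (9 / 4) * C₁ + (25 / 32) * y ^ 8
        + (3 / 2) * (C₁ ^ ((2 : ℝ) / 3) * y ^ ((8 : ℝ) / 3)
          + C₁ ^ ((1 : ℝ) / 3) * y ^ ((16 : ℝ) / 3)))
    (hV₁ : V₁ = max 100 (8 * y ^ 2))
    (hV₂ : V₂ = max V₁ (max ((3 / 2) * y ^ 4) (Real.sqrt (2 * C₁)))) :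
    ∀ v : ℝ, V₂ ≤ v → ∀ x : ℝ, 1 ≤ x → x ≤ Real.sqrt (v / (v - 2)) →
      |((v + a) / (v + a * x ^ 2)) ^ ((v + 1) / 2)
          - Real.exp ((a / 2) * (1 - x ^ 2))
            * (1 + ((a ^ 2 / 4) * (x ^ 4 - 1) - (a / 2) * (x ^ 2 - 1)) / v)|
        < Real.exp ((a / 2) * (1 - x ^ 2)) * C₂ / v ^ 2 := by
  intro v hv x hx1 hx2
  have hy0 : (0:ℝ) < y := lt_trans one_pos hy
  have ha1 : 1 < a := by rw [ha]; nlinarith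
  have ha0 : (0:ℝ) < a := lt_trans one_pos ha1
  -- v bounds
  have hv100 : (100:ℝ) ≤ v := by
    have h1 : V₁ ≤ V₂ := by rw [hV₂]; exact le_max_left _ _
    have h2 : (100:ℝ) ≤ V₁ := by rw [hV₁]; exact le_max_left _ _
    linarith
  have hva : (3/2) * a^2 ≤ v := by
    have h1 : (3/2)*y^4 ≤ V₂ := by
      rw [hV₂]; exact le_trans (le_max_left _ _) (le_max_right _ _)
    have h2 : (3/2) * a^2 = (3/2)*y^4 := by rw [ha]; ring
    linarith
  have hv0 : (0:ℝ) < v := by linarith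
  have hp : (0:ℝ) < v - 2 := by linarith
  -- t bounds
  obtain ⟨t, htdef⟩ : ∃ t : ℝ, t = x^2 - 1 := ⟨_, rfl⟩
  rw [show x^2 - 1 = t from htdef.symm]
  have hx0 : (0:ℝ) ≤ x := le_trans zero_le_one hx1
  have ht0 : 0 ≤ t := by nlinarith
  have hx2sq : x^2 ≤ v/(v-2) := by
    have hs := Real.sq_sqrt (show (0:ℝ) ≤ v/(v-2) by positivity)
    have := pow_le_pow_left₀ hx0 hx2 2
    linarith [this.trans_eq hs]
  have ht2 : t * (v-2) ≤ 2 := by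
    have := (le_div_iff₀ hp).mp hx2sq
    nlinarith
  have ht49 : t ≤ 1/49 := by nlinarith
  have htv : t * v ≤ 100/49 := by nlinarith
  have ht2v : t^2 * v ≤ 100/2401 := by
    have h := mul_le_mul htv ht49 ht0 (by norm_num : (0:ℝ) ≤ 100/49)
    calc t^2*v = t*v*t := by ring
      _ ≤ 100/49*(1/49) := h
      _ ≤ 100/2401 := by norm_num
  -- u setup
  have hvA : (0:ℝ) < v + a := by linarith
  have hvx : (0:ℝ) < v + a*x^2 := by positivity
  obtain ⟨u, hudef⟩ : ∃ u : ℝ, u = a*t/(v+a) := ⟨_, rfl⟩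
  have hu0 : (0:ℝ) ≤ u := by rw [hudef]; positivity
  have h1u : (0:ℝ) < 1 + u := by linarith
  have huvat : u * (v+a) = a*t := by
    rw [hudef]; field_simp
  have hfact : v + a*x^2 = (v+a)*(1+u) := by
    have : x^2 = t + 1 := by rw [htdef]; ring
    rw [this]; field_simp [hudef]; linear_combination (-1) * huvat
  have hbase : (v+a)/(v+a*x^2) = (1+u)⁻¹ := by
    rw [hfact]; rw [div_mul_eq_div_div]; rw [div_self (ne_of_gt hvA)]; rw [one_div]
  obtain ⟨L, hLdef⟩ : ∃ L : ℝ, L = Real.log (1+u) := ⟨_, rfl⟩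
  obtain ⟨δ, hδdef⟩ : ∃ δ : ℝ, δ = a*t/2 - ((v+1)/2)*L := ⟨_, rfl⟩
  have hf : ((v+a)/(v+a*x^2)) ^ ((v+1)/2)
      = Real.exp ((a/2)*(1-x^2)) * Real.exp δ := by
    rw [Real.rpow_def_of_pos (by positivity), hbase, Real.log_inv, ← Real.exp_add]
    congr 1
    rw [hδdef, hLdef, htdef]; ring
  -- log bounds
  have hlogle : L ≤ u := by
    have := Real.log_le_sub_one_of_pos h1u
    rw [hLdef]; linarith
  have hlogge : u - u^2 ≤ L := by
    have h1 : Real.log (1+u)⁻¹ ≤ (1+u)⁻¹ - 1 := Real.log_le_sub_one_of_pos (by positivity)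
    rw [Real.log_inv] at h1
    have h2 : (1+u)⁻¹ ≤ 1 - u + u^2 := by
      rw [inv_eq_one_div, div_le_iff₀ h1u]; nlinarith [pow_nonneg hu0 3]
    rw [hLdef]; linarith
  -- u bounds
  have huv : u * v ≤ a * t := by nlinarith
  -- δ bounds
  have hδ0 : (0:ℝ) ≤ δ := by
    have h := mul_le_mul_of_nonneg_left hlogle (show (0:ℝ) ≤ (v+1)/2 by linarith)
    have key : a*t/2 - ((v+1)/2)*u = (u/2)*(a-1) := by linear_combination (-1/2) * huvat
    have h0 : (u/2)*(a-1) ≥ 0 := mul_nonneg (by positivity) (by linarith)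
    rw [hδdef]; linarith [h, key, h0]
  -- δ upper bound
  have hδle : δ ≤ (u/2)*(a-1) + ((v+1)/2)*u^2 := by
    have h := mul_le_mul_of_nonneg_left hlogge (show (0:ℝ) ≤ (v+1)/2 by linarith)
    have key : a*t/2 - ((v+1)/2)*(u - u^2) = (u/2)*(a-1) + ((v+1)/2)*u^2 := by
      linear_combination (-1/2) * huvat
    rw [hδdef]; linarith [h, key]
  have hδv2 : δ * v^2 ≤ (11/10) * a^2 := by
    have hA : u*(a-1)*v^2 ≤ (100/49)*a^2 := by
      have h1 : u*v*(a-1) ≤ a*t*(a-1) := mul_le_mul_of_nonneg_right huv (by linarith)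
      have h2 : a*t*(a-1) ≤ a*t*a := mul_le_mul_of_nonneg_left (by linarith) (by positivity)
      have h3 : u*v*(a-1)*v ≤ a*t*a*v := mul_le_mul_of_nonneg_right (h1.trans h2) hv0.le
      have h4 : a^2*(t*v) ≤ a^2*(100/49) := mul_le_mul_of_nonneg_left htv (sq_nonneg a)
      calc u*(a-1)*v^2 = u*v*(a-1)*v := by ring
        _ ≤ a*t*a*v := h3
        _ = a^2*(t*v) := by ring
        _ ≤ a^2*(100/49) := h4
        _ = (100/49)*a^2 := by ring
    have hB : (v+1)*u^2*v^2 ≤ (101/2401)*a^2 := by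
      have h5 : (u*v)^2 ≤ (a*t)^2 :=
        pow_le_pow_left₀ (mul_nonneg hu0 hv0.le) huv 2
      have h6 : (a*t)^2*(v+1) ≤ (101/2401)*a^2 := by
        have h7 : a^2*(t^2*v) ≤ a^2*(100/2401) := mul_le_mul_of_nonneg_left ht2v (sq_nonneg a)
        have h8 : t^2 ≤ 1/2401 := by
          calc t^2 = t*t := sq t
            _ ≤ (1/49)*(1/49) := mul_le_mul ht49 ht49 ht0 (by norm_num)
            _ = 1/2401 := by norm_num
        have h9 : a^2*t^2 ≤ a^2*(1/2401) := mul_le_mul_of_nonneg_left h8 (sq_nonneg a)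
        linarith [h7, h9]
      have h10 : (u*v)^2*(v+1) ≤ (a*t)^2*(v+1) := mul_le_mul_of_nonneg_right h5 (by linarith)
      linarith [h10, h6]
    have h11 := mul_le_mul_of_nonneg_right hδle (sq_nonneg v)
    linarith [h11, hA, hB, sq_nonneg a]
  have k1 : δ*v^2 ≤ (11/15)*v := by linarith [hδv2, hva]
  have k2 : δ*v ≤ 11/15 := by
    have h : δ*v*v ≤ (11/15)*v := by
      calc δ*v*v = δ*v^2 := by ring
        _ ≤ (11/15)*v := k1
    exact le_of_mul_le_mul_right h hv0
  have hδ1 : δ ≤ 1/100 := by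
    have h : 0 ≤ δ*(v-100) := mul_nonneg hδ0 (by linarith)
    linarith [k2, h]
  -- exp bound
  have hexpδ : Real.exp δ - 1 ≤ (100/99)*δ := by
    have h1d : (0:ℝ) < 1 - δ := by linarith
    have h2 : 1 - δ ≤ Real.exp (-δ) := by linarith [Real.add_one_le_exp (-δ)]
    have h3 : Real.exp δ ≤ (1-δ)⁻¹ := by
      have := inv_anti₀ h1d h2
      rwa [Real.exp_neg, inv_inv] at this
    have h4 : (1-δ)⁻¹ ≤ 1 + (100/99)*δ := by
      have hsq : 0 ≤ δ*(1/100 - δ) := mul_nonneg hδ0 (by linarith)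
      rw [inv_eq_one_div, div_le_iff₀ h1d]; linarith [hsq]
    linarith
  have hexp1 : 1 ≤ Real.exp δ := Real.one_le_exp hδ0
  -- E bounds
  obtain ⟨E, hEdef⟩ : ∃ E : ℝ, E = a ^ 2 / 4 * (x ^ 4 - 1) - a / 2 * t := ⟨_, rfl⟩
  rw [show a ^ 2 / 4 * (x ^ 4 - 1) - a / 2 * t = E from hEdef.symm]
  have hE : E = (a^2/4)*t^2 + (a*(a-1)/2)*t := by rw [hEdef, htdef]; ring
  have hE0 : 0 ≤ E := by
    rw [hE]
    have h1 : 0 ≤ a*(a-1)*t := mul_nonneg (mul_nonneg ha0.le (by linarith)) ht0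
    have h2 : 0 ≤ a^2*t^2 := mul_nonneg (sq_nonneg a) (sq_nonneg t)
    linarith [h1, h2]
  have hEv : E * v ≤ (11/10)*a^2 := by
    rw [hE]
    have h7 : a^2*(t^2*v) ≤ a^2*(100/2401) := mul_le_mul_of_nonneg_left ht2v (sq_nonneg a)
    have h8 : a^2*(t*v) ≤ a^2*(100/49) := mul_le_mul_of_nonneg_left htv (sq_nonneg a)
    have h9 : (0:ℝ) ≤ a*(t*v) := mul_nonneg ha0.le (mul_nonneg ht0 hv0.le)
    linarith [h7, h8, h9, sq_nonneg a]
  -- C₂ bound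
  have hC₁0 : (0:ℝ) ≤ C₁ := by rw [hC₁]; positivity
  have hr1 : (0:ℝ) ≤ C₁ ^ ((2:ℝ)/3) * y ^ ((8:ℝ)/3) :=
    mul_nonneg (Real.rpow_nonneg hC₁0 _) (Real.rpow_nonneg hy0.le _)
  have hr2 : (0:ℝ) ≤ C₁ ^ ((1:ℝ)/3) * y ^ ((16:ℝ)/3) :=
    mul_nonneg (Real.rpow_nonneg hC₁0 _) (Real.rpow_nonneg hy0.le _)
  have hC₁ge : (11/4)*a^2 ≤ C₁ := by
    have hy2 : 1 < y^2 := ha ▸ ha1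
    have h : 0 ≤ y^4*(y^2-1) := mul_nonneg (by positivity) (by linarith)
    rw [hC₁, ha]; linarith [h]
  have hC2a : (3/2)*a^2 < C₂ := by
    have ha2 : (0:ℝ) < a^2 := by positivity
    have h8 : (0:ℝ) ≤ y^8 := by positivity
    rw [hC₂]; linarith [hr1, hr2, hC₁ge, ha2, h8]
  -- final assembly
  have hvsq : (0:ℝ) < v^2 := by positivity
  have hEvv : E/v*v^2 = E*v := by field_simp
  have hDu : (Real.exp δ - (1+E/v)) * v^2 < C₂ := by
    have h1 : Real.exp δ - (1+E/v) ≤ (100/99)*δ := by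
      have : 0 ≤ E/v := div_nonneg hE0 hv0.le
      linarith
    have h2 := mul_le_mul_of_nonneg_right h1 (sq_nonneg v)
    have ha2 : (0:ℝ) < a^2 := by positivity
    linarith [h2, hδv2, hC2a, ha2]
  have hDl : -C₂ < (Real.exp δ - (1+E/v)) * v^2 := by
    have h1 : -(Real.exp δ - (1+E/v)) ≤ E/v := by linarith
    have h2 := mul_le_mul_of_nonneg_right h1 (sq_nonneg v)
    have ha2 : (0:ℝ) < a^2 := by positivity
    linarith [h2, hEvv, hEv, hC2a, ha2]
  have habs : |Real.exp δ - (1+E/v)| < C₂/v^2 := by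
    rw [abs_lt]
    constructor
    · have h := (div_lt_iff₀ hvsq).mpr hDl
      rw [neg_div] at h
      exact h
    · exact (lt_div_iff₀ hvsq).mpr hDu
  have hsplit : ((v+a)/(v+a*x^2)) ^ ((v+1)/2)
      - Real.exp ((a/2)*(1-x^2)) * (1+E/v)
      = Real.exp ((a/2)*(1-x^2)) * (Real.exp δ - (1+E/v)) := by
    rw [hf]; ring
  calc |((v+a)/(v+a*x^2)) ^ ((v+1)/2) - Real.exp ((a/2)*(1-x^2)) * (1+E/v)|
      = Real.exp ((a/2)*(1-x^2)) * |Real.exp δ - (1+E/v)| := by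
        rw [hsplit, abs_mul, abs_of_pos (Real.exp_pos _)]
    _ < Real.exp ((a/2)*(1-x^2)) * (C₂/v^2) :=
        mul_lt_mul_of_pos_left habs (Real.exp_pos _)
    _ = Real.exp ((a/2)*(1-x^2)) * C₂ / v^2 := by ring
end

section
/- For every real v ≥ 1318.4 one has G(v,√3) > 1, where G(v,√3) := v·∫_1^{√(v/(v−2))} ((v+3)/(v+3x²))^{(v+1)/2} dx. -/
open MeasureTheory Real intervalIntegral

set_option maxHeartbeats 1000000 in
theorem stmt_15 (v : ℝ) (hv : (1318.4 : ℝ) ≤ v) :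
    1 < v * ∫ x in (1 : ℝ)..Real.sqrt (v / (v - 2)),
      ((v + 3) / (v + 3 * x ^ 2)) ^ ((v + 1) / 2) := by
  have hv2 : (0:ℝ) < v - 2 := by nlinarith
  have hv0 : (0:ℝ) < v := by nlinarith
  set b : ℝ := Real.sqrt (v / (v - 2)) with hbdef
  have hbb : b ^ 2 = v / (v - 2) := by
    rw [hbdef, sq_sqrt (by positivity)]
  have hb1 : 1 < b := by
    rw [hbdef, show (1:ℝ) = Real.sqrt 1 by simp]
    apply Real.sqrt_lt_sqrt (by norm_num)
    rw [lt_div_iff₀ hv2]; nlinarith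
  have hbu : b ≤ 1.0008 := by
    rw [hbdef, show (1.0008:ℝ) = Real.sqrt (1.0008^2) by rw [Real.sqrt_sq]; norm_num]
    apply Real.sqrt_le_sqrt
    rw [div_le_iff₀ hv2]; nlinarith
  have hC : v * (b ^ 2 - 1) = 2 * b ^ 2 := by
    rw [hbb]; field_simp; ring
  set c : ℝ := 3 * (v + 1) / (2 * (v + 3)) with hcdef
  -- pointwise lower bound by linear function
  have key : ∀ x ∈ Set.Icc (1:ℝ) b,
      1 - c * (x ^ 2 - 1) ≤ ((v + 3) / (v + 3 * x ^ 2)) ^ ((v + 1) / 2) := by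
    intro x hx
    obtain ⟨hx1, hxb⟩ := hx
    have hx2 : 1 ≤ x ^ 2 := by nlinarith
    have hden : (0:ℝ) < v + 3 * x ^ 2 := by nlinarith
    set s : ℝ := (3 - 3 * x ^ 2) / (v + 3 * x ^ 2) with hsdef
    have hsge : -1 ≤ s := by
      rw [hsdef, le_div_iff₀ hden]; nlinarith
    have hp1 : (1:ℝ) ≤ (v + 1) / 2 := by nlinarith
    have hbase : (v + 3) / (v + 3 * x ^ 2) = 1 + s := by
      rw [hsdef]; field_simp; ring
    have hbern := one_add_mul_self_le_rpow_one_add hsge hp1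
    rw [hbase]
    refine le_trans ?_ hbern
    -- 1 - c*(x^2-1) ≤ 1 + ((v+1)/2) * s
    have hs3 : ((v + 1) / 2) * s = -((v+1)/2 * (3 * (x^2 - 1)) / (v + 3 * x^2)) := by
      rw [hsdef]; ring
    have hv3' : (0:ℝ) < 2 * (v + 3) := by nlinarith
    have hcx : (v+1)/2 * (3 * (x^2 - 1)) / (v + 3 * x^2) ≤ c * (x ^ 2 - 1) := by
      rw [hcdef, show 3 * (v + 1) / (2 * (v + 3)) * (x ^ 2 - 1)
          = 3 * (v + 1) * (x ^ 2 - 1) / (2 * (v + 3)) by ring,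
        div_le_div_iff₀ hden hv3']
      nlinarith [mul_nonneg (mul_nonneg (by nlinarith : (0:ℝ) ≤ 3*(v+1))
        (by nlinarith : (0:ℝ) ≤ x^2-1)) (by nlinarith : (0:ℝ) ≤ 3*x^2-3)]
    linarith [hcx, hs3]
  -- integrability
  have hcont : Continuous fun x : ℝ => ((v + 3) / (v + 3 * x ^ 2)) ^ ((v + 1) / 2) := by
    apply Continuous.rpow_const
    · exact (continuous_const.div
        (continuous_const.add (continuous_const.mul (continuous_pow 2)))
        (fun x => by positivity))
    · intro x; right; nlinarith
  have hclin : Continuous fun x : ℝ => 1 - c * (x ^ 2 - 1) :=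
    continuous_const.sub (continuous_const.mul ((continuous_pow 2).sub continuous_const))
  have hint1 : IntervalIntegrable (fun x : ℝ => 1 - c * (x ^ 2 - 1)) volume 1 b :=
    hclin.intervalIntegrable 1 b
  have hint2 : IntervalIntegrable
      (fun x : ℝ => ((v + 3) / (v + 3 * x ^ 2)) ^ ((v + 1) / 2)) volume 1 b :=
    hcont.intervalIntegrable 1 b
  have hmono := intervalIntegral.integral_mono_on (le_of_lt hb1) hint1 hint2 key
  -- compute the linear integral
  have hlin : (∫ x in (1:ℝ)..b, (1 - c * (x ^ 2 - 1)))
      = (b - 1) - c * ((b ^ 3 - 1) / 3 - (b - 1)) := by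
    have e1 : IntervalIntegrable (fun _ : ℝ => (1:ℝ)) volume 1 b :=
      intervalIntegrable_const
    have e2 : IntervalIntegrable (fun x : ℝ => c * (x ^ 2 - 1)) volume 1 b :=
      (continuous_const.mul ((continuous_pow 2).sub continuous_const)).intervalIntegrable 1 b
    rw [intervalIntegral.integral_sub e1 e2, intervalIntegral.integral_const_mul]
    have e3 : IntervalIntegrable (fun x : ℝ => x ^ 2) volume 1 b :=
      (continuous_pow 2).intervalIntegrable 1 b
    have e4 : IntervalIntegrable (fun _ : ℝ => (1:ℝ)) volume 1 b :=
      intervalIntegrable_const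
    rw [intervalIntegral.integral_sub e3 e4, integral_pow]
    simp only [intervalIntegral.integral_const, smul_eq_mul, mul_one]
    norm_num
  rw [hlin] at hmono
  -- final polynomial inequality
  have hv3 : (0:ℝ) < v + 3 := by nlinarith
  have hF : 0 < v * (2 * (v+3) * (b-1) + 3 * (v+1) * (b-1) - (v+1) * (b^3-1)) - 2 * (v+3) := by
    have hid : (b^2-1)^2 * (v * (2 * (v+3) * (b-1) + 3 * (v+1) * (b-1) - (v+1) * (b^3-1)) - 2 * (v+3))
        = (v * (-b^5 + 6*b^3 - 4*b^2 - 5*b + 4) + (-3*b^5 + 20*b^3 - 18*b^2 - 9*b + 10))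
            * (v * (b^2 - 1) - 2 * b^2)
          + (-6*b^7 + 40*b^5 - 42*b^4 - 18*b^3 + 32*b^2 - 6) := by ring
    have hCz : v * (b ^ 2 - 1) - 2 * b ^ 2 = 0 := by linarith [hC]
    have hr : (0:ℝ) < -6*b^7 + 40*b^5 - 42*b^4 - 18*b^3 + 32*b^2 - 6 := by
      have hfac : -6*b^7 + 40*b^5 - 42*b^4 - 18*b^3 + 32*b^2 - 6
          = (b-1)^3 * (-6*b^4 - 18*b^3 + 4*b^2 + 18*b + 6) := by ring
      rw [hfac]
      have h1 : (0:ℝ) < (b-1)^3 := pow_pos (by linarith) 3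
      have h2 : (0:ℝ) < -6*b^4 - 18*b^3 + 4*b^2 + 18*b + 6 := by nlinarith
      exact mul_pos h1 h2
    have h4 : (0:ℝ) < (b^2-1)^2 := pow_pos (by nlinarith) 2
    have h5 : (b^2-1)^2 * (v * (2 * (v+3) * (b-1) + 3 * (v+1) * (b-1) - (v+1) * (b^3-1)) - 2 * (v+3))
        = -6*b^7 + 40*b^5 - 42*b^4 - 18*b^3 + 32*b^2 - 6 := by
      rw [hid, hCz, mul_zero, zero_add]
    have h6 : (0:ℝ) < (b^2-1)^2 * (v * (2 * (v+3) * (b-1) + 3 * (v+1) * (b-1) - (v+1) * (b^3-1)) - 2 * (v+3)) := by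
      rw [h5]; exact hr
    by_contra hneg
    push_neg at hneg
    have h7 := mul_nonpos_of_nonneg_of_nonpos h4.le hneg
    linarith
  have hE : 1 < v * ((b - 1) - c * ((b ^ 3 - 1) / 3 - (b - 1))) := by
    rw [hcdef]
    rw [show v * ((b - 1) - 3 * (v + 1) / (2 * (v + 3)) * ((b ^ 3 - 1) / 3 - (b - 1)))
        = (v * (2 * (v+3) * (b-1) + 3 * (v+1) * (b-1) - (v+1) * (b^3-1))) / (2 * (v+3)) by
      field_simp; ring]
    rw [lt_div_iff₀ (by positivity)]
    linarith [hF]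
  calc (1:ℝ) < v * ((b - 1) - c * ((b ^ 3 - 1) / 3 - (b - 1))) := hE
    _ ≤ v * ∫ x in (1:ℝ)..b, ((v + 3) / (v + 3 * x ^ 2)) ^ ((v + 1) / 2) := by
        apply mul_le_mul_of_nonneg_left hmono (le_of_lt hv0)
end
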